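/- Let X = {X_1, …, X_n} be finitely-valued random variables partitioned into disjoint blocks S_1, …, S_L, and for each l ≥ 2 let Π_l ⊆ S_1 ∪ ⋯ ∪ S_{l−1}. Suppose P and Q are joint distributions on the n variables admitting the common factorization P(x) = P_{S_1}(x_{S_1})·∏_{l=2}^{L} P_{S_l | Π_l}(x_{S_l} | x_{Π_l}) and Q(x) = Q_{S_1}(x_{S_1})·∏_{l=2}^{L} Q_{S_l | Π_l}(x_{S_l} | x_{Π_l}); equivalently, for each l, under P (respectively Q) the block X_{S_l} is conditionally independent of X_{(S_1 ∪ ⋯ ∪ S_{l−1}) \ Π_l} given X_{Π_l}, i.e. the marginal on S_1 ∪ ⋯ ∪ S_l times the marginal on Π_l equals the marginal on S_1 ∪ ⋯ ∪ S_{l−1} times the marginal on S_l ∪ Π_l pointwise. Then H²(P, Q) ≤ H²(P_{S_1}, Q_{S_1}) + Σ_{l=2}^{L} H²(P_{S_l ∪ Π_l}, Q_{S_l ∪ Π_l}). -/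

import Mathlib

/-- The squared Hellinger distance `H²(p,q) = 1 - ∑ₖ √(pₖ qₖ)` between two
probability mass functions on a finite type. -/
noncomputable def sqHellinger {α : Type*} [Fintype α] (p q : α → ℝ) : ℝ :=
  1 - ∑ k, Real.sqrt (p k * q k)

open scoped Classical in
/-- The marginal of a joint distribution `P` on coordinates in the finite set `T`. -/
noncomputable def marg {ι : Type*} [Fintype ι] {α : ι → Type*} [∀ i, Fintype (α i)]
    (P : (∀ i, α i) → ℝ) (T : Finset ι) : ((i : T) → α i) → ℝ :=
  fun y => ∑ x : ∀ i, α i, if (∀ i : T, x i = y i) then P x else 0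

open scoped Classical

namespace SqHAux


noncomputable def pf {Ω Γ : Type*} [Fintype Ω] (φ : Ω → Γ) (p : Ω → ℝ) : Γ → ℝ :=
  fun g => ∑ ω, if φ ω = g then p ω else 0

lemma pf_nonneg {Ω Γ : Type*} [Fintype Ω] (φ : Ω → Γ) {p : Ω → ℝ}
    (hp : ∀ ω, 0 ≤ p ω) (g : Γ) : 0 ≤ pf φ p g :=
  Finset.sum_nonneg fun ω _ => by split <;> simp [hp ω]

lemma sum_pf {Ω Γ : Type*} [Fintype Ω] [Fintype Γ] (φ : Ω → Γ) (p : Ω → ℝ) :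
    ∑ g, pf φ p g = ∑ ω, p ω := by
  unfold pf
  rw [Finset.sum_comm]
  exact Finset.sum_congr rfl fun ω _ => by simp

lemma pf_comp {Ω Γ Δ : Type*} [Fintype Ω] [Fintype Γ] (φ : Ω → Γ) (χ : Γ → Δ) (p : Ω → ℝ) :
    pf (χ ∘ φ) p = pf χ (pf φ p) := by
  funext d
  unfold pf
  have : ∀ g : Γ, (if χ g = d then (∑ ω, if φ ω = g then p ω else 0) else 0)
      = ∑ ω, if χ g = d ∧ φ ω = g then p ω else 0 := by
    intro g
    split
    · exact Finset.sum_congr rfl fun ω _ => by simp_all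
    · rw [eq_comm, Finset.sum_eq_zero]; intro ω _; simp_all
  rw [Finset.sum_congr rfl fun g _ => this g, Finset.sum_comm]
  refine Finset.sum_congr rfl fun ω _ => ?_
  rw [Finset.sum_eq_single (φ ω)]
  · simp
  · intro g _ hg; simp [Ne.symm hg]
  · simp

lemma pf_fiber {Ω Γ Δ : Type*} [Fintype Ω] [Fintype Γ] (φ : Ω → Γ) (χ : Γ → Δ)
    (p : Ω → ℝ) (d : Δ) :
    ∑ g ∈ Finset.univ.filter (fun g => χ g = d), pf φ p g = pf (χ ∘ φ) p d := by
  rw [pf_comp]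
  conv_rhs => rw [pf]
  rw [Finset.sum_filter]

lemma sum_sqrt_mul_le {ι : Type*} (s : Finset ι) (a b : ι → ℝ)
    (ha : ∀ i, 0 ≤ a i) (hb : ∀ i, 0 ≤ b i) :
    ∑ i ∈ s, Real.sqrt (a i * b i) ≤ Real.sqrt ((∑ i ∈ s, a i) * (∑ i ∈ s, b i)) := by
  have h1 : ∀ i ∈ s, Real.sqrt (a i * b i) = Real.sqrt (a i) * Real.sqrt (b i) := by
    intro i _; exact Real.sqrt_mul (ha i) _
  rw [Finset.sum_congr rfl h1, Real.sqrt_mul (Finset.sum_nonneg fun i _ => ha i)]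
  exact Real.sum_sqrt_mul_sqrt_le s ha hb

lemma key_scalar {u v w r : ℝ} (hu0 : 0 ≤ u) (hv0 : 0 ≤ v) (hw : 0 ≤ w)
    (hur : u ≤ r) (hvr : v ≤ r) (heq : w * r = u * v) : u + v ≤ w + r := by
  rcases eq_or_lt_of_le (hu0.trans hur) with hr | hr
  · have hu : u = 0 := le_antisymm (hur.trans hr.symm.le) hu0
    have hv : v = 0 := le_antisymm (hvr.trans hr.symm.le) hv0
    rw [hu, hv, ← hr]; linarith
  · nlinarith [mul_nonneg (sub_nonneg.2 hur) (sub_nonneg.2 hvr)]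

lemma abstract_step {Ω ΩA ΩB ΩC : Type*} [Fintype Ω] [Fintype ΩA] [Fintype ΩB] [Fintype ΩC]
    (φ : Ω → ΩA) (ψ : Ω → ΩB) (χA : ΩA → ΩC) (χB : ΩB → ΩC)
    (hcomm : ∀ ω, χA (φ ω) = χB (ψ ω))
    (hfib : ∀ a b, χA a = χB b → ∃! ω, φ ω = a ∧ ψ ω = b)
    (p q : Ω → ℝ) (hp : ∀ ω, 0 ≤ p ω) (hq : ∀ ω, 0 ≤ q ω)
    (hPfac : ∀ ω, p ω * pf (χA ∘ φ) p (χA (φ ω)) = pf φ p (φ ω) * pf ψ p (ψ ω))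
    (hQfac : ∀ ω, q ω * pf (χA ∘ φ) q (χA (φ ω)) = pf φ q (φ ω) * pf ψ q (ψ ω)) :
    ∑ a, Real.sqrt (pf φ p a * pf φ q a) + ∑ b, Real.sqrt (pf ψ p b * pf ψ q b) ≤
      ∑ ω, Real.sqrt (p ω * q ω) + ∑ c, Real.sqrt (pf (χA ∘ φ) p c * pf (χA ∘ φ) q c) := by
  -- fiberwise decomposition over c : ΩC
  have hdecA : ∑ a, Real.sqrt (pf φ p a * pf φ q a)
      = ∑ c, ∑ a ∈ Finset.univ.filter (fun a => χA a = c),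
          Real.sqrt (pf φ p a * pf φ q a) := by
    rw [Finset.sum_fiberwise_eq_sum_filter Finset.univ Finset.univ χA]
    simp
  have hdecB : ∑ b, Real.sqrt (pf ψ p b * pf ψ q b)
      = ∑ c, ∑ b ∈ Finset.univ.filter (fun b => χB b = c),
          Real.sqrt (pf ψ p b * pf ψ q b) := by
    rw [Finset.sum_fiberwise_eq_sum_filter Finset.univ Finset.univ χB]
    simp
  have hdecW : ∑ ω, Real.sqrt (p ω * q ω)
      = ∑ c, ∑ ω ∈ Finset.univ.filter (fun ω => χA (φ ω) = c),
          Real.sqrt (p ω * q ω) := by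
    rw [Finset.sum_fiberwise_eq_sum_filter Finset.univ Finset.univ (fun ω => χA (φ ω))]
    simp
  rw [hdecA, hdecB, hdecW, ← Finset.sum_add_distrib, ← Finset.sum_add_distrib]
  refine Finset.sum_le_sum fun c _ => ?_
  set u := ∑ a ∈ Finset.univ.filter (fun a => χA a = c), Real.sqrt (pf φ p a * pf φ q a) with hu
  set v := ∑ b ∈ Finset.univ.filter (fun b => χB b = c), Real.sqrt (pf ψ p b * pf ψ q b) with hv
  set w := ∑ ω ∈ Finset.univ.filter (fun ω => χA (φ ω) = c), Real.sqrt (p ω * q ω) with hw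
  set r := Real.sqrt (pf (χA ∘ φ) p c * pf (χA ∘ φ) q c) with hr
  have hu0 : 0 ≤ u := Finset.sum_nonneg fun _ _ => Real.sqrt_nonneg _
  have hv0 : 0 ≤ v := Finset.sum_nonneg fun _ _ => Real.sqrt_nonneg _
  have hw0 : 0 ≤ w := Finset.sum_nonneg fun _ _ => Real.sqrt_nonneg _
  have hur : u ≤ r := by
    rw [hu, hr]
    calc ∑ a ∈ Finset.univ.filter (fun a => χA a = c), Real.sqrt (pf φ p a * pf φ q a)
        ≤ Real.sqrt ((∑ a ∈ Finset.univ.filter (fun a => χA a = c), pf φ p a) *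
            (∑ a ∈ Finset.univ.filter (fun a => χA a = c), pf φ q a)) :=
          sum_sqrt_mul_le _ _ _ (pf_nonneg φ hp) (pf_nonneg φ hq)
      _ = Real.sqrt (pf (χA ∘ φ) p c * pf (χA ∘ φ) q c) := by
          rw [pf_fiber φ χA p c, pf_fiber φ χA q c]
  have hvr : v ≤ r := by
    have hce : χA ∘ φ = χB ∘ ψ := funext hcomm
    rw [hv, hr, hce]
    calc ∑ b ∈ Finset.univ.filter (fun b => χB b = c), Real.sqrt (pf ψ p b * pf ψ q b)
        ≤ Real.sqrt ((∑ b ∈ Finset.univ.filter (fun b => χB b = c), pf ψ p b) *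
            (∑ b ∈ Finset.univ.filter (fun b => χB b = c), pf ψ q b)) :=
          sum_sqrt_mul_le _ _ _ (pf_nonneg ψ hp) (pf_nonneg ψ hq)
      _ = Real.sqrt (pf (χB ∘ ψ) p c * pf (χB ∘ ψ) q c) := by
          rw [pf_fiber ψ χB p c, pf_fiber ψ χB q c]
  have heq : w * r = u * v := by
    rw [hw, hr, hu, hv, Finset.sum_mul, Finset.sum_mul_sum]
    -- LHS: ∑_{ω ∈ fiber} √(pωqω) * √(pfc p c * pfc q c)
    -- RHS: ∑_{a,b} √(pfφp a * pfφq a) * √(pfψp b * pfψq b)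
    rw [← Finset.sum_product']
    refine Finset.sum_bij' (fun ω _ => (φ ω, ψ ω))
      (fun ab hab => (hfib ab.1 ab.2 (by
        simp only [Finset.mem_product, Finset.mem_filter] at hab
        rw [hab.1.2, hab.2.2])).choose) ?_ ?_ ?_ ?_ ?_
    · intro ω hω
      simp only [Finset.mem_filter, Finset.mem_univ, true_and] at hω ⊢
      rw [Finset.mem_product]
      constructor
      · simp [hω]
      · simp [← hcomm ω, hω]
    · intro ab hab
      have h := (hfib ab.1 ab.2 (by
        simp only [Finset.mem_product, Finset.mem_filter] at hab
        rw [hab.1.2, hab.2.2])).choose_spec.1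
      simp only [Finset.mem_filter, Finset.mem_univ, true_and]
      rw [h.1]
      simp only [Finset.mem_product, Finset.mem_filter] at hab
      exact hab.1.2
    · intro ω hω
      have h := hfib (φ ω) (ψ ω) (hcomm ω)
      exact (h.unique h.choose_spec.1 ⟨rfl, rfl⟩)
    · intro ab hab
      have h := (hfib ab.1 ab.2 (by
        simp only [Finset.mem_product, Finset.mem_filter] at hab
        rw [hab.1.2, hab.2.2])).choose_spec.1
      exact Prod.ext h.1 h.2
    · intro ω hω'
      have hω : χA (φ ω) = c := (Finset.mem_filter.mp hω').2
      rw [← Real.sqrt_mul (mul_nonneg (hp ω) (hq ω)),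
          ← Real.sqrt_mul (mul_nonneg (pf_nonneg φ hp _) (pf_nonneg φ hq _))]
      congr 1
      have key : (p ω * pf (χA ∘ φ) p (χA (φ ω))) * (q ω * pf (χA ∘ φ) q (χA (φ ω)))
          = (pf φ p (φ ω) * pf ψ p (ψ ω)) * (pf φ q (φ ω) * pf ψ q (ψ ω)) := by
        rw [hPfac ω, hQfac ω]
      rw [hω] at key
      linear_combination key
  linarith [key_scalar hu0 hv0 hw0 hur hvr heq]


variable {n : ℕ} {α : Fin n → Type*} [∀ i, Fintype (α i)]

def resF (T : Finset (Fin n)) : (∀ i, α i) → ((i : T) → α i) := fun x i => x i.1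

def resM {T T' : Finset (Fin n)} (h : T ⊆ T') : ((i : T') → α i) → ((i : T) → α i) :=
  fun y i => y ⟨i.1, h i.2⟩

lemma marg_eq_pf (P : (∀ i, α i) → ℝ) (T : Finset (Fin n)) :
    marg P T = pf (resF T) P := by
  funext y
  apply Finset.sum_congr
  · congr!
  · intro x _
    by_cases h : resF (α := α) T x = y
    · rw [if_pos h, if_pos (show ∀ i : T, x i = y i from fun i => congrFun h i)]
    · rw [if_neg h, if_neg (show ¬ ∀ i : T, x i = y i from
        fun hc => h (funext fun i => hc i))]

lemma resF_comp {T T' : Finset (Fin n)} (h : T ⊆ T') :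
    resF (α := α) T = resM h ∘ resF T' := rfl

lemma marg_resM (P : (∀ i, α i) → ℝ) {T T' : Finset (Fin n)} (h : T ⊆ T') :
    marg P T = pf (resM h) (marg P T') := by
  rw [marg_eq_pf, marg_eq_pf, resF_comp h, pf_comp]

lemma marg_nonneg {P : (∀ i, α i) → ℝ} (hP0 : ∀ x, 0 ≤ P x) (T : Finset (Fin n))
    (y : (i : T) → α i) : 0 ≤ marg P T y := by
  rw [marg_eq_pf]; exact pf_nonneg _ hP0 y

lemma sum_marg (P : (∀ i, α i) → ℝ) (T : Finset (Fin n)) :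
    ∑ y, marg P T y = ∑ x, P x := by
  rw [marg_eq_pf]; exact sum_pf _ _

lemma bc_le_one {P Q : (∀ i, α i) → ℝ} (hP0 : ∀ x, 0 ≤ P x) (hP1 : ∑ x, P x = 1)
    (hQ0 : ∀ x, 0 ≤ Q x) (hQ1 : ∑ x, Q x = 1) (T : Finset (Fin n)) :
    ∑ y, Real.sqrt (marg P T y * marg Q T y) ≤ 1 := by
  calc ∑ y, Real.sqrt (marg P T y * marg Q T y)
      ≤ Real.sqrt ((∑ y, marg P T y) * (∑ y, marg Q T y)) :=
        sum_sqrt_mul_le _ _ _ (marg_nonneg hP0 T) (marg_nonneg hQ0 T)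
    _ = 1 := by rw [sum_marg, sum_marg, hP1, hQ1]; simp

set_option maxHeartbeats 1000000 in
lemma concrete_step (P Q : (∀ i, α i) → ℝ)
    (hP0 : ∀ x, 0 ≤ P x) (hQ0 : ∀ x, 0 ≤ Q x) (hne : ∀ i, Nonempty (α i))
    (A B C : Finset (Fin n)) (hCA : C ⊆ A) (hAB : Disjoint A B)
    (hfacP : ∀ x : ∀ i, α i,
      marg P (A ∪ B) (fun i => x i.1) * marg P C (fun i => x i.1) =
        marg P A (fun i => x i.1) * marg P (B ∪ C) (fun i => x i.1))
    (hfacQ : ∀ x : ∀ i, α i,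
      marg Q (A ∪ B) (fun i => x i.1) * marg Q C (fun i => x i.1) =
        marg Q A (fun i => x i.1) * marg Q (B ∪ C) (fun i => x i.1)) :
    ∑ a, Real.sqrt (marg P A a * marg Q A a) +
      ∑ b, Real.sqrt (marg P (B ∪ C) b * marg Q (B ∪ C) b) ≤
    ∑ z, Real.sqrt (marg P (A ∪ B) z * marg Q (A ∪ B) z) +
      ∑ c, Real.sqrt (marg P C c * marg Q C c) := by
  have hA : A ⊆ A ∪ B := Finset.subset_union_left
  have hBC : B ∪ C ⊆ A ∪ B := Finset.union_subset
    (Finset.subset_union_right) (hCA.trans Finset.subset_union_left)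
  have hCAB : C ⊆ A ∪ B := hCA.trans hA
  have hCBC : C ⊆ B ∪ C := Finset.subset_union_right
  have hcomm : ∀ ω : (i : (A ∪ B : Finset (Fin n))) → α i,
      resM (α := α) hCA (resM hA ω) = resM hCBC (resM hBC ω) := fun ω => rfl
  have hfib : ∀ (a : (i : A) → α i) (b : (i : (B ∪ C : Finset (Fin n))) → α i),
      resM (α := α) hCA a = resM hCBC b →
      ∃! ω : (i : (A ∪ B : Finset (Fin n))) → α i, resM hA ω = a ∧ resM hBC ω = b := by
    intro a b hab
    refine ⟨fun i => if h : i.1 ∈ A then a ⟨i.1, h⟩ else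
      b ⟨i.1, Finset.mem_union_left C ((Finset.mem_union.mp i.2).resolve_left h)⟩,
      ⟨?_, ?_⟩, ?_⟩
    · funext i
      dsimp only [resM]
      exact dif_pos i.2
    · funext i
      dsimp only [resM]
      split
      · rename_i h
        have hC : i.1 ∈ C := by
          rcases Finset.mem_union.mp i.2 with hB | hC
          · exact absurd h (Finset.disjoint_right.mp hAB hB)
          · exact hC
        exact congrFun hab ⟨i.1, hC⟩
      · rfl
    · rintro ω' ⟨h1, h2⟩
      funext i
      symm
      split
      · rename_i h
        exact (congrFun h1 ⟨i.1, h⟩).symm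
      · rename_i h
        have hB : i.1 ∈ B := (Finset.mem_union.mp i.2).resolve_left h
        exact (congrFun h2 ⟨i.1, Finset.mem_union_left C hB⟩).symm
  have hfacP' : ∀ ω : (i : (A ∪ B : Finset (Fin n))) → α i,
      marg P (A ∪ B) ω * marg P C (resM hCAB ω) =
        marg P A (resM hA ω) * marg P (B ∪ C) (resM hBC ω) := by
    intro ω
    set X : ∀ i, α i := fun i => if h : i ∈ A ∪ B then ω ⟨i, h⟩ else (hne i).some with hX
    have h1 := hfacP X
    have e1 : (fun (i : (A ∪ B : Finset (Fin n))) => X i.1) = ω := by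
      funext i; exact dif_pos i.2
    have e2 : (fun (i : (C : Finset (Fin n))) => X i.1) = resM hCAB ω := by
      funext i; exact dif_pos (hCAB i.2)
    have e3 : (fun (i : (A : Finset (Fin n))) => X i.1) = resM hA ω := by
      funext i; exact dif_pos (hA i.2)
    have e4 : (fun (i : (B ∪ C : Finset (Fin n))) => X i.1) = resM hBC ω := by
      funext i; exact dif_pos (hBC i.2)
    rw [e1, e2, e3, e4] at h1
    exact h1
  have hfacQ' : ∀ ω : (i : (A ∪ B : Finset (Fin n))) → α i,
      marg Q (A ∪ B) ω * marg Q C (resM hCAB ω) =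
        marg Q A (resM hA ω) * marg Q (B ∪ C) (resM hBC ω) := by
    intro ω
    set X : ∀ i, α i := fun i => if h : i ∈ A ∪ B then ω ⟨i, h⟩ else (hne i).some with hX
    have h1 := hfacQ X
    have e1 : (fun (i : (A ∪ B : Finset (Fin n))) => X i.1) = ω := by
      funext i; exact dif_pos i.2
    have e2 : (fun (i : (C : Finset (Fin n))) => X i.1) = resM hCAB ω := by
      funext i; exact dif_pos (hCAB i.2)
    have e3 : (fun (i : (A : Finset (Fin n))) => X i.1) = resM hA ω := by
      funext i; exact dif_pos (hA i.2)
    have e4 : (fun (i : (B ∪ C : Finset (Fin n))) => X i.1) = resM hBC ω := by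
      funext i; exact dif_pos (hBC i.2)
    rw [e1, e2, e3, e4] at h1
    exact h1
  have habs := abstract_step (resM (α := α) hA) (resM hBC) (resM hCA) (resM hCBC)
    hcomm hfib (marg P (A ∪ B)) (marg Q (A ∪ B))
    (marg_nonneg hP0 _) (marg_nonneg hQ0 _) ?_ ?_
  · rw [← marg_resM P hA, ← marg_resM Q hA, ← marg_resM P hBC, ← marg_resM Q hBC] at habs
    have hcomp : resM (α := α) hCA ∘ resM hA = resM hCAB := rfl
    rw [hcomp, ← marg_resM P hCAB, ← marg_resM Q hCAB] at habs
    exact habs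
  · intro ω
    have hcomp : resM (α := α) hCA ∘ resM hA = resM hCAB := rfl
    rw [hcomp, ← marg_resM P hCAB, ← marg_resM P hA, ← marg_resM P hBC]
    exact hfacP' ω
  · intro ω
    have hcomp : resM (α := α) hCA ∘ resM hA = resM hCAB := rfl
    rw [hcomp, ← marg_resM Q hCAB, ← marg_resM Q hA, ← marg_resM Q hBC]
    exact hfacQ' ω


lemma marg_empty (P : (∀ i, α i) → ℝ) (y : (i : (∅ : Finset (Fin n))) → α i) :
    marg P ∅ y = ∑ x, P x := by
  apply Finset.sum_congr
  · congr!
  · intro x _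
    rw [if_pos (fun i => absurd i.2 (Finset.notMem_empty i.1))]

lemma bc_empty {P Q : (∀ i, α i) → ℝ} (hP1 : ∑ x, P x = 1) (hQ1 : ∑ x, Q x = 1) :
    ∑ y : (i : (∅ : Finset (Fin n))) → α i,
      Real.sqrt (marg P ∅ y * marg Q ∅ y) = 1 := by
  have h1 : ∀ y : (i : (∅ : Finset (Fin n))) → α i,
      Real.sqrt (marg P ∅ y * marg Q ∅ y) = 1 := by
    intro y
    rw [marg_empty, marg_empty, hP1, hQ1]
    simp
  rw [Finset.sum_congr rfl fun y _ => h1 y, Finset.sum_const]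
  haveI : IsEmpty ((∅ : Finset (Fin n)) : Type _) :=
    ⟨fun i => absurd i.2 (Finset.notMem_empty i.1)⟩
  haveI : Unique ((i : (∅ : Finset (Fin n))) → α i) := Pi.uniqueOfIsEmpty _
  rw [Finset.card_univ, Fintype.card_eq_one_iff.mpr ⟨default, fun y => Subsingleton.elim y _⟩]
  simp

lemma marg_univ (P : (∀ i, α i) → ℝ) (y : (i : (Finset.univ : Finset (Fin n))) → α i) :
    marg P Finset.univ y = P (fun i => y ⟨i, Finset.mem_univ i⟩) := by
  have hcond : ∀ x : ∀ i, α i,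
      (∀ i : (Finset.univ : Finset (Fin n)), x i = y i) ↔
        x = fun i => y ⟨i, Finset.mem_univ i⟩ := by
    intro x
    constructor
    · intro h; funext i; exact h ⟨i, Finset.mem_univ i⟩
    · intro h i; rw [h]
  calc marg P Finset.univ y
      = ∑ x : ∀ i, α i, if x = (fun i => y ⟨i, Finset.mem_univ i⟩) then P x else 0 := by
        apply Finset.sum_congr
        · congr!
        · intro x _
          by_cases h : x = (fun i => y ⟨i, Finset.mem_univ i⟩)
          · rw [if_pos h, if_pos ((hcond x).mpr h)]
          · rw [if_neg h, if_neg (fun hc => h ((hcond x).mp hc))]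
    _ = P (fun i => y ⟨i, Finset.mem_univ i⟩) := by
        rw [Finset.sum_ite_eq' Finset.univ _ P]
        simp

lemma bc_univ (P Q : (∀ i, α i) → ℝ) :
    ∑ y : (i : (Finset.univ : Finset (Fin n))) → α i,
      Real.sqrt (marg P Finset.univ y * marg Q Finset.univ y) =
    ∑ x, Real.sqrt (P x * Q x) := by
  rw [Finset.sum_congr rfl fun y _ => by rw [marg_univ P y, marg_univ Q y]]
  exact Fintype.sum_bijective
    (fun (y : (i : (Finset.univ : Finset (Fin n))) → α i) (i : Fin n) =>
      y ⟨i, Finset.mem_univ i⟩)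
    ⟨fun y y' h => funext fun i => congrFun h i.1,
     fun x => ⟨fun i => x i.1, rfl⟩⟩ _ _ (fun y => rfl)


noncomputable def BCf (P Q : (∀ i, α i) → ℝ) (T : Finset (Fin n)) : ℝ :=
  ∑ y, Real.sqrt (marg P T y * marg Q T y)

def Tm {L : ℕ} (S : Fin L → Finset (Fin n)) (m : ℕ) : Finset (Fin n) :=
  (Finset.univ.filter (fun j : Fin L => j.val < m)).biUnion S

set_option maxHeartbeats 1000000 in
lemma main_claim {L : ℕ} (S : Fin L → Finset (Fin n))
    (hdisj : ∀ l l' : Fin L, l ≠ l' → Disjoint (S l) (S l'))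
    (Par : Fin L → Finset (Fin n))
    (hPar : ∀ l : Fin L, Par l ⊆ (Finset.univ.filter (fun j => j < l)).biUnion S)
    (P Q : (∀ i, α i) → ℝ)
    (hP0 : ∀ x, 0 ≤ P x) (hP1 : ∑ x, P x = 1)
    (hQ0 : ∀ x, 0 ≤ Q x) (hQ1 : ∑ x, Q x = 1)
    (hne : ∀ i, Nonempty (α i))
    (hPfac : ∀ l : Fin L, 0 < l.val → ∀ x : ∀ i, α i,
      marg P ((Finset.univ.filter (fun j => j ≤ l)).biUnion S) (fun i => x i.1) *
          marg P (Par l) (fun i => x i.1) =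
        marg P ((Finset.univ.filter (fun j => j < l)).biUnion S) (fun i => x i.1) *
          marg P (S l ∪ Par l) (fun i => x i.1))
    (hQfac : ∀ l : Fin L, 0 < l.val → ∀ x : ∀ i, α i,
      marg Q ((Finset.univ.filter (fun j => j ≤ l)).biUnion S) (fun i => x i.1) *
          marg Q (Par l) (fun i => x i.1) =
        marg Q ((Finset.univ.filter (fun j => j < l)).biUnion S) (fun i => x i.1) *
          marg Q (S l ∪ Par l) (fun i => x i.1)) :
    ∀ m : ℕ, m ≤ L →
      1 - BCf P Q (Tm S m) ≤ ∑ l ∈ Finset.univ.filter (fun l : Fin L => l.val < m),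
        (1 - BCf P Q (S l ∪ Par l)) := by
  intro m
  induction m with
  | zero =>
    intro _
    have e0 : Tm S 0 = (∅ : Finset (Fin n)) := by simp [Tm]
    rw [e0]
    have h1 : BCf P Q (∅ : Finset (Fin n)) = 1 := bc_empty hP1 hQ1
    rw [h1]
    simp
  | succ m ih =>
    intro hm1
    have hm : m < L := hm1
    set l : Fin L := ⟨m, hm⟩ with hl
    have efil : Finset.univ.filter (fun j : Fin L => j.val < m + 1)
        = insert l (Finset.univ.filter (fun j : Fin L => j.val < m)) := by
      ext j
      simp only [Finset.mem_filter, Finset.mem_univ, true_and, Finset.mem_insert, hl,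
        Fin.ext_iff]
      omega
    have hlnot : l ∉ Finset.univ.filter (fun j : Fin L => j.val < m) := by simp [hl]
    rw [efil, Finset.sum_insert hlnot]
    have eTm1 : Tm S (m + 1) = Tm S m ∪ S l := by
      ext i
      simp only [Tm, Finset.mem_biUnion, Finset.mem_filter, Finset.mem_univ, true_and,
        Finset.mem_union]
      constructor
      · rintro ⟨j, hj, hij⟩
        rcases Nat.lt_succ_iff_lt_or_eq.mp hj with h | h
        · exact Or.inl ⟨j, h, hij⟩
        · right
          have hjl : j = l := Fin.ext h
          rwa [hjl] at hij
      · rintro (⟨j, hj, hij⟩ | hi)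
        · exact ⟨j, Nat.lt_succ_of_lt hj, hij⟩
        · exact ⟨l, Nat.lt_succ_self m, hi⟩
    have step : BCf P Q (Tm S m) + BCf P Q (S l ∪ Par l) ≤ BCf P Q (Tm S (m + 1)) + 1 := by
      rcases Nat.eq_zero_or_pos m with hm0 | hm0
      · subst hm0
        have h2 : (Finset.univ.filter (fun j : Fin L => j < l)) = ∅ := by
          ext j
          simp [hl, Fin.lt_def]
        have hPar0 : Par l = ∅ := by
          have h3 := hPar l
          rw [h2] at h3
          simpa using Finset.subset_empty.mp (by simpa using h3)
        have eT0 : Tm S 0 = (∅ : Finset (Fin n)) := by simp [Tm]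
        have eT1 : Tm S (0 + 1) = S l ∪ Par l := by
          rw [eTm1, eT0, hPar0, Finset.empty_union, Finset.union_empty]
        rw [eT1, eT0]
        have h1 : BCf P Q (∅ : Finset (Fin n)) = 1 := bc_empty hP1 hQ1
        rw [h1]
        linarith
      · have hl0 : 0 < l.val := hm0
        have efill : Finset.univ.filter (fun j : Fin L => j < l)
            = Finset.univ.filter (fun j : Fin L => j.val < m) := by
          ext j
          simp [Fin.lt_def, hl]
        have efille : (Finset.univ.filter (fun j : Fin L => j ≤ l)).biUnion S
            = Tm S m ∪ S l := by
          rw [← eTm1]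
          congr 1
          ext j
          simp [Fin.le_def, hl, Nat.lt_succ_iff]
        have efill2 : (Finset.univ.filter (fun j : Fin L => j < l)).biUnion S = Tm S m := by
          rw [efill]; rfl
        have hCA : Par l ⊆ Tm S m := by
          have h3 := hPar l
          rwa [efill2] at h3
        have hAB : Disjoint (Tm S m) (S l) := by
          rw [Tm, Finset.disjoint_biUnion_left]
          intro j hj
          refine hdisj j l (fun hjl => ?_)
          simp only [Finset.mem_filter, Finset.mem_univ, true_and] at hj
          rw [hjl, hl] at hj
          exact absurd hj (lt_irrefl m)
        have hfacP : ∀ x : ∀ i, α i,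
            marg P (Tm S m ∪ S l) (fun i => x i.1) * marg P (Par l) (fun i => x i.1) =
            marg P (Tm S m) (fun i => x i.1) *
              marg P (S l ∪ Par l) (fun i => x i.1) := by
          intro x
          have h := hPfac l hl0 x
          rwa [efille, efill2] at h
        have hfacQ : ∀ x : ∀ i, α i,
            marg Q (Tm S m ∪ S l) (fun i => x i.1) * marg Q (Par l) (fun i => x i.1) =
            marg Q (Tm S m) (fun i => x i.1) *
              marg Q (S l ∪ Par l) (fun i => x i.1) := by
          intro x
          have h := hQfac l hl0 x
          rwa [efille, efill2] at h
        have hstep := concrete_step P Q hP0 hQ0 hne (Tm S m) (S l) (Par l) hCA hAB hfacP hfacQ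
        have hbc1 : BCf P Q (Par l) ≤ 1 := bc_le_one hP0 hP1 hQ0 hQ1 (Par l)
        rw [eTm1]
        have hstep' : BCf P Q (Tm S m) + BCf P Q (S l ∪ Par l) ≤
            BCf P Q (Tm S m ∪ S l) + BCf P Q (Par l) := hstep
        linarith
    have ih' := ih (le_of_lt hm)
    linarith

end SqHAux


set_option maxHeartbeats 1000000 in
theorem sqHellinger_subadditive
    {n L : ℕ} (α : Fin n → Type*) [∀ i, Fintype (α i)]
    (S : Fin L → Finset (Fin n))
    (hdisj : ∀ l l' : Fin L, l ≠ l' → Disjoint (S l) (S l'))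
    (hcover : Finset.univ.biUnion S = (Finset.univ : Finset (Fin n)))
    (Par : Fin L → Finset (Fin n))
    (hPar : ∀ l : Fin L, Par l ⊆ (Finset.univ.filter (fun j => j < l)).biUnion S)
    (P Q : (∀ i, α i) → ℝ)
    (hP0 : ∀ x, 0 ≤ P x) (hP1 : ∑ x, P x = 1)
    (hQ0 : ∀ x, 0 ≤ Q x) (hQ1 : ∑ x, Q x = 1)
    (hPfac : ∀ l : Fin L, 0 < l.val → ∀ x : ∀ i, α i,
      marg P ((Finset.univ.filter (fun j => j ≤ l)).biUnion S) (fun i => x i.1) *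
          marg P (Par l) (fun i => x i.1) =
        marg P ((Finset.univ.filter (fun j => j < l)).biUnion S) (fun i => x i.1) *
          marg P (S l ∪ Par l) (fun i => x i.1))
    (hQfac : ∀ l : Fin L, 0 < l.val → ∀ x : ∀ i, α i,
      marg Q ((Finset.univ.filter (fun j => j ≤ l)).biUnion S) (fun i => x i.1) *
          marg Q (Par l) (fun i => x i.1) =
        marg Q ((Finset.univ.filter (fun j => j < l)).biUnion S) (fun i => x i.1) *
          marg Q (S l ∪ Par l) (fun i => x i.1)) :
    sqHellinger P Q ≤
      ∑ l : Fin L, sqHellinger (marg P (S l ∪ Par l)) (marg Q (S l ∪ Par l)) := by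
  have hne : ∀ i, Nonempty (α i) := by
    by_contra h
    push_neg at h
    obtain ⟨i, hi⟩ := h
    haveI : IsEmpty (α i) := hi
    haveI : IsEmpty (∀ j, α j) := ⟨fun x => IsEmpty.false (x i)⟩
    rw [Finset.univ_eq_empty, Finset.sum_empty] at hP1
    exact absurd hP1 (by norm_num)
  have hfinal := SqHAux.main_claim S hdisj Par hPar P Q hP0 hP1 hQ0 hQ1 hne hPfac hQfac
    L (le_refl L)
  have hfilL : Finset.univ.filter (fun l : Fin L => l.val < L) = Finset.univ :=
    Finset.filter_true_of_mem (fun l _ => l.isLt)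
  rw [hfilL] at hfinal
  have eTL : SqHAux.Tm S L = (Finset.univ : Finset (Fin n)) := by
    rw [show SqHAux.Tm S L
        = (Finset.univ.filter (fun j : Fin L => j.val < L)).biUnion S from rfl, hfilL]
    exact hcover
  have hbcU : SqHAux.BCf P Q (SqHAux.Tm S L) = ∑ x, Real.sqrt (P x * Q x) := by
    rw [eTL]
    exact SqHAux.bc_univ P Q
  rw [hbcU] at hfinal
  have hlhs : sqHellinger P Q = 1 - ∑ x, Real.sqrt (P x * Q x) := rfl
  have hrhs : ∀ l : Fin L, sqHellinger (marg P (S l ∪ Par l)) (marg Q (S l ∪ Par l))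
      = 1 - SqHAux.BCf P Q (S l ∪ Par l) := fun l => rfl
  rw [hlhs, Finset.sum_congr rfl (fun l _ => hrhs l)]
  exact hfinal
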